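/- Let G be a finite group and a, b non-negative integers with a + b ≥ d(G). If the graph Γ*_{a,b}(G) (obtained from Γ_{a,b}(G) by deleting isolated vertices) is connected, then Γ*_{a,b}(G/N) is connected for every normal subgroup N of G. -/

import Mathlib

set_option linter.unusedSectionVars false

open Subgroup Set Function

section Gaschutz

variable {G H : Type*} [Group G] [Group H] [Finite G]

/-- number of tuples lifting `u` whose closure is exactly `K`. -/
private noncomputable def gcnt {ι : Type*} (f : G →* H) (u : ι → H) (K : Subgroup G) : ℕ :=
  Nat.card {g : ι → G // (∀ i, f (g i) = u i) ∧ closure (Set.range g) = K}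

private lemma gcnt_eq_zero {ι : Type*} (f : G →* H) (u : ι → H)
    (hu : closure (Set.range u) = ⊤) (K : Subgroup G) (hK : K.map f ≠ ⊤) :
    gcnt f u K = 0 := by
  rw [gcnt, Nat.card_eq_zero]
  left
  rw [isEmpty_iff]
  rintro ⟨g, hg, hcl⟩
  apply hK
  rw [← hcl, MonoidHom.map_closure, ← Set.range_comp]
  have : (f ∘ g) = u := funext hg
  rw [this, hu]

private lemma total_indep {ι : Type*} (f : G →* H) (u u' : ι → H)
    (K : Subgroup G) (hK : K.map f = ⊤) :
    Nat.card {g : ι → G // (∀ i, f (g i) = u i) ∧ ∀ i, g i ∈ K}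
      = Nat.card {g : ι → G // (∀ i, f (g i) = u' i) ∧ ∀ i, g i ∈ K} := by
  have hbase : ∀ (v : ι → H), ∃ g : ι → G, (∀ i, f (g i) = v i) ∧ ∀ i, g i ∈ K := by
    intro v
    have h1 : ∀ i, ∃ k, k ∈ K ∧ f k = v i := by
      intro i
      have : v i ∈ K.map f := hK ▸ mem_top _
      simpa [Subgroup.mem_map] using this
    choose g hg1 hg2 using h1
    exact ⟨g, hg2, hg1⟩
  obtain ⟨g₀, hg₀f, hg₀K⟩ := hbase u
  obtain ⟨g₁, hg₁f, hg₁K⟩ := hbase u'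
  apply Nat.card_congr
  refine ⟨fun g => ⟨fun i => g.1 i * (g₀ i)⁻¹ * g₁ i, fun i => ?_, fun i => ?_⟩,
          fun g => ⟨fun i => g.1 i * (g₁ i)⁻¹ * g₀ i, fun i => ?_, fun i => ?_⟩, ?_, ?_⟩
  · simp [g.2.1 i, hg₀f i, hg₁f i]
  · exact K.mul_mem (K.mul_mem (g.2.2 i) (K.inv_mem (hg₀K i))) (hg₁K i)
  · simp [g.2.1 i, hg₁f i, hg₀f i]
  · exact K.mul_mem (K.mul_mem (g.2.2 i) (K.inv_mem (hg₁K i))) (hg₀K i)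
  · intro g; ext i; simp [mul_assoc]
  · intro g; ext i; simp [mul_assoc]

private lemma nat_card_sigma {ι : Type*} [Fintype ι] (f : ι → Type*) [∀ i, Finite (f i)] :
    Nat.card (Σ i, f i) = ∑ i, Nat.card (f i) := by
  letI := fun i => Fintype.ofFinite (f i)
  simp [Nat.card_eq_fintype_card, Fintype.card_sigma]

private lemma total_partition {ι : Type*} [Finite ι] (f : G →* H) (u : ι → H)
    (K : Subgroup G) [Fintype {K' : Subgroup G // K' ≤ K}] :
    Nat.card {g : ι → G // (∀ i, f (g i) = u i) ∧ ∀ i, g i ∈ K}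
      = ∑ K' : {K' : Subgroup G // K' ≤ K}, gcnt f u K'.1 := by
  classical
  set φ : {g : ι → G // (∀ i, f (g i) = u i) ∧ ∀ i, g i ∈ K} → {K' : Subgroup G // K' ≤ K} :=
    fun g => ⟨closure (Set.range g.1), by
      rw [closure_le]; rintro x ⟨i, rfl⟩; exact g.2.2 i⟩ with hφ
  rw [← Nat.card_congr (Equiv.sigmaFiberEquiv φ), nat_card_sigma]
  refine Finset.sum_congr rfl fun K' _ => ?_
  apply Nat.card_congr
  refine ⟨fun g => ⟨g.1.1, g.1.2.1, congrArg Subtype.val g.2⟩,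
          fun g => ⟨⟨g.1, g.2.1, fun i => K'.2 ?_⟩, Subtype.ext g.2.2⟩,
          fun g => rfl, fun g => rfl⟩
  exact (le_of_eq g.2.2) (subset_closure (Set.mem_range_self i))

private lemma gcnt_indep {ι : Type*} [Finite ι] (f : G →* H) (u u' : ι → H)
    (hu : closure (Set.range u) = ⊤) (hu' : closure (Set.range u') = ⊤) :
    ∀ K : Subgroup G, gcnt f u K = gcnt f u' K := by
  intro K
  induction K using WellFoundedLT.induction with
  | ind K ih =>
    by_cases hK : K.map f = ⊤
    · classical
      letI : Fintype {K' : Subgroup G // K' ≤ K} := Fintype.ofFinite _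
      have htot := total_indep f u u' K hK
      rw [total_partition f u K, total_partition f u' K] at htot
      have hmem : (⟨K, le_rfl⟩ : {K' : Subgroup G // K' ≤ K}) ∈ Finset.univ :=
        Finset.mem_univ _
      rw [← Finset.add_sum_erase _ _ hmem, ← Finset.add_sum_erase _ _ hmem] at htot
      have hrest : ∑ K' ∈ Finset.univ.erase (⟨K, le_rfl⟩ : {K' : Subgroup G // K' ≤ K}), gcnt f u K'.1
          = ∑ K' ∈ Finset.univ.erase (⟨K, le_rfl⟩ : {K' : Subgroup G // K' ≤ K}), gcnt f u' K'.1 := by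
        refine Finset.sum_congr rfl fun K' hK' => ?_
        have hne : K'.1 ≠ K := by
          intro hh
          exact (Finset.mem_erase.mp hK').1 (Subtype.ext hh)
        exact ih K'.1 (lt_of_le_of_ne K'.2 hne)
      rw [hrest] at htot
      exact Nat.add_right_cancel htot
    · rw [gcnt_eq_zero f u hu K hK, gcnt_eq_zero f u' hu' K hK]

/-- Gaschütz's lemma. -/
private lemma gaschutz {ι : Type*} [Finite ι] (f : G →* H) (hf : Function.Surjective f)
    (hn : Group.rank G ≤ Nat.card ι) (u : ι → H) (hu : closure (Set.range u) = ⊤) :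
    ∃ g : ι → G, (∀ i, f (g i) = u i) ∧ closure (Set.range g) = ⊤ := by
  classical
  -- a generating tuple of G indexed by ι
  obtain ⟨S, hScard, hSgen⟩ := Group.rank_spec G
  letI : Fintype ι := Fintype.ofFinite ι
  have hcard : Fintype.card S ≤ Fintype.card ι := by
    rw [Fintype.card_coe, hScard, ← Nat.card_eq_fintype_card]
    exact hn
  obtain ⟨emb⟩ := Function.Embedding.nonempty_of_card_le hcard
  set g₀ : ι → G := Function.extend emb (fun s => (s : G)) (fun _ => 1) with hg₀def
  have hSsub : (S : Set G) ⊆ Set.range g₀ := by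
    intro s hs
    exact ⟨emb ⟨s, hs⟩, emb.injective.extend_apply _ _ _⟩
  have hg₀gen : closure (Set.range g₀) = ⊤ :=
    top_le_iff.mp (hSgen ▸ closure_mono hSsub)
  have hubar : closure (Set.range (f ∘ g₀)) = ⊤ := by
    rw [Set.range_comp, ← MonoidHom.map_closure, hg₀gen, Subgroup.map_top_of_surjective f hf]
  have hne : gcnt f (f ∘ g₀) (⊤ : Subgroup G) ≠ 0 := by
    have : Nonempty {g : ι → G // (∀ i, f (g i) = (f ∘ g₀) i) ∧ closure (Set.range g) = ⊤} :=
      ⟨⟨g₀, fun i => rfl, hg₀gen⟩⟩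
    rw [gcnt]
    exact Nat.card_ne_zero.mpr ⟨this, inferInstance⟩
  have h2 : gcnt f u (⊤ : Subgroup G) ≠ 0 := by
    rw [gcnt_indep f u (f ∘ g₀) hu hubar (⊤ : Subgroup G)]
    exact hne
  rw [gcnt] at h2
  obtain ⟨⟨g, hg1, hg2⟩⟩ := (Nat.card_ne_zero.mp h2).1
  exact ⟨g, hg1, hg2⟩

end Gaschutz

/-- The graph `Γ_{a,b}(G)` on `G^a ∪ G^b` (encoded as a sum type): two tuples of
complementary lengths are adjacent iff their combined entries generate `G`. -/
def genGraph (G : Type*) [Group G] (a b : ℕ) :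
    SimpleGraph ((Fin a → G) ⊕ (Fin b → G)) where
  Adj u v := ∃ (x : Fin a → G) (y : Fin b → G),
    ((u = Sum.inl x ∧ v = Sum.inr y) ∨ (u = Sum.inr y ∧ v = Sum.inl x)) ∧
    Subgroup.closure (Set.range x ∪ Set.range y) = ⊤
  symm := by
    constructor
    rintro u v ⟨x, y, (⟨h1, h2⟩ | ⟨h1, h2⟩), hgen⟩
    · exact ⟨x, y, Or.inr ⟨h2, h1⟩, hgen⟩
    · exact ⟨x, y, Or.inl ⟨h2, h1⟩, hgen⟩
  loopless := by
    constructor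
    rintro u ⟨x, y, (⟨h1, h2⟩ | ⟨h1, h2⟩), -⟩ <;> simp_all

/-- `Γ*_{a,b}(G)` is connected: any two non-isolated vertices of `Γ_{a,b}(G)`
are joined by a path. -/
def gammaStarConnected (G : Type*) [Group G] (a b : ℕ) : Prop :=
  ∀ u v : (Fin a → G) ⊕ (Fin b → G),
    (∃ w, (genGraph G a b).Adj u w) → (∃ w, (genGraph G a b).Adj v w) →
    (genGraph G a b).Reachable u v

section Push

variable {G H : Type*} [Group G] [Group H]

/-- Pushing tuples along a surjective homomorphism gives a graph homomorphism. -/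
private def pushHom (f : G →* H) (hf : Function.Surjective f) (a b : ℕ) :
    genGraph G a b →g genGraph H a b where
  toFun := Sum.map (fun x => f ∘ x) (fun y => f ∘ y)
  map_rel' := by
    rintro u v ⟨x, y, (⟨h1, h2⟩ | ⟨h1, h2⟩), hgen⟩ <;> subst h1 <;> subst h2
    · refine ⟨f ∘ x, f ∘ y, Or.inl ⟨rfl, rfl⟩, ?_⟩
      rw [Set.range_comp, Set.range_comp, ← Set.image_union, ← MonoidHom.map_closure,
        hgen, Subgroup.map_top_of_surjective f hf]
    · refine ⟨f ∘ x, f ∘ y, Or.inr ⟨rfl, rfl⟩, ?_⟩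
      rw [Set.range_comp, Set.range_comp, ← Set.image_union, ← MonoidHom.map_closure,
        hgen, Subgroup.map_top_of_surjective f hf]

end Push

/-- From a non-isolated vertex `u` of `Γ(G/N)`, produce a non-isolated vertex of `Γ(G)`
mapping to `u`. -/
private lemma lift_nonisolated {G : Type*} [Group G] [Finite G] {a b : ℕ}
    (hab : Group.rank G ≤ a + b) (N : Subgroup G) [N.Normal]
    (u : (Fin a → G ⧸ N) ⊕ (Fin b → G ⧸ N))
    (hu : ∃ w, (genGraph (G ⧸ N) a b).Adj u w) :
    ∃ U, (∃ w, (genGraph G a b).Adj U w) ∧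
      (pushHom (QuotientGroup.mk' N) (QuotientGroup.mk'_surjective N) a b) U = u := by
  set f := QuotientGroup.mk' N
  obtain ⟨w, x, y, hor, hgen⟩ := hu
  -- combine into a single tuple and lift via Gaschütz
  have hcard : Group.rank G ≤ Nat.card (Fin a ⊕ Fin b) := by
    simpa using hab
  have hgen' : Subgroup.closure (Set.range (Sum.elim x y)) = ⊤ := by
    rwa [Set.Sum.elim_range]
  obtain ⟨g, hg1, hg2⟩ := gaschutz f (QuotientGroup.mk'_surjective N) hcard
    (Sum.elim x y) hgen'
  set x' : Fin a → G := g ∘ Sum.inl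
  set y' : Fin b → G := g ∘ Sum.inr
  have hx' : f ∘ x' = x := funext fun i => hg1 (Sum.inl i)
  have hy' : f ∘ y' = y := funext fun i => hg1 (Sum.inr i)
  have hgsplit : Subgroup.closure (Set.range x' ∪ Set.range y') = ⊤ := by
    have : g = Sum.elim x' y' := by funext i; cases i <;> rfl
    rw [← Set.Sum.elim_range, ← this, hg2]
  rcases hor with ⟨h1, -⟩ | ⟨h1, -⟩
  · exact ⟨Sum.inl x', ⟨Sum.inr y', x', y', Or.inl ⟨rfl, rfl⟩, hgsplit⟩,
      by rw [h1]; exact congrArg Sum.inl hx'⟩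
  · exact ⟨Sum.inr y', ⟨Sum.inl x', x', y', Or.inr ⟨rfl, rfl⟩, hgsplit⟩,
      by rw [h1]; exact congrArg Sum.inr hy'⟩

theorem stmt_7 {G : Type*} [Group G] [Finite G] (a b : ℕ)
    (hab : Group.rank G ≤ a + b)
    (h : gammaStarConnected G a b)
    (N : Subgroup G) [N.Normal] :
    gammaStarConnected (G ⧸ N) a b := by
  intro u v hu hv
  obtain ⟨U, hU, hUeq⟩ := lift_nonisolated hab N u hu
  obtain ⟨V, hV, hVeq⟩ := lift_nonisolated hab N v hv
  have hreach := h U V hU hV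
  have := hreach.map (pushHom (QuotientGroup.mk' N) (QuotientGroup.mk'_surjective N) a b)
  rwa [hUeq, hVeq] at this
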